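/- Let G = K(H,T) be a kite graph with head H, root v, and tail formed by s ≥ 2 paths of length r with vertices v_{i1}, …, v_{ir} (i = 1, …, s), and let G⁺ be a graph obtained from G by adding some edges among the vertices of each set U_j = {v_{2j}, v_{3j}, …, v_{sj}}, for each j ∈ {1, …, r}. Then every distinct eigenvalue of L(G) is also an eigenvalue of L(G⁺) (not necessarily with the same multiplicity); in particular, α(G⁺) = α(G). -/

import Mathlib

open Matrix

attribute [local instance] Classical.propDecidable

/-- The Laplacian matrix `L(G) = D(G) - A(G)` of a simple graph, over `ℝ`. -/
noncomputable def lapMat {V : Type*} [Fintype V] (G : SimpleGraph V) : Matrix V V ℝ :=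
  fun u w =>
    (if u = w then ∑ x : V, (if G.Adj u x then (1 : ℝ) else 0) else 0)
      - (if G.Adj u w then (1 : ℝ) else 0)

/-- The smallest eigenvalue of a symmetric real matrix, as the infimum of Rayleigh quotients. -/
noncomputable def lambdaMin {m : Type*} [Fintype m] (M : Matrix m m ℝ) : ℝ :=
  sInf {t : ℝ | ∃ x : m → ℝ, x ≠ 0 ∧ (x ⬝ᵥ (M *ᵥ x)) / (x ⬝ᵥ x) = t}

/-- The algebraic connectivity `α(G)`: the second smallest Laplacian eigenvalue, characterized
as the minimum Rayleigh quotient over nonzero vectors orthogonal to the all-ones vector. -/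
noncomputable def algConn {V : Type*} [Fintype V] (G : SimpleGraph V) : ℝ :=
  sInf {t : ℝ | ∃ x : V → ℝ, x ≠ 0 ∧ (∑ v, x v) = 0 ∧
    (x ⬝ᵥ ((lapMat G) *ᵥ x)) / (x ⬝ᵥ x) = t}

/-- A Fiedler vector: an eigenvector of `L(G)` for the eigenvalue `α(G)`. -/
noncomputable def IsFiedlerVector {V : Type*} [Fintype V] (G : SimpleGraph V) (x : V → ℝ) : Prop :=
  x ≠ 0 ∧ (lapMat G) *ᵥ x = algConn G • x

/-- The `k`-token graph of `G`: vertices are the `k`-subsets of the vertex set, two subsets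
being adjacent iff their symmetric difference is a pair `{u, v}` with `uv` an edge of `G`. -/
def tokenGraph {V : Type*} [DecidableEq V] (G : SimpleGraph V) (k : ℕ) :
    SimpleGraph {A : Finset V // A.card = k} where
  Adj A B := ∃ u v : V, G.Adj u v ∧ symmDiff A.val B.val = {u, v}
  symm := by
    constructor
    rintro A B ⟨u, v, h, hs⟩
    exact ⟨u, v, h, by rwa [symmDiff_comm]⟩
  loopless := by
    constructor
    rintro A ⟨u, v, h, hs⟩
    rw [symmDiff_self] at hs
    have : u ∈ (⊥ : Finset V) := hs ▸ Finset.mem_insert_self u {v}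
    simp at this

/-- Adding the edge `uv` to `G`. -/
def addEdge {V : Type*} (G : SimpleGraph V) (u v : V) : SimpleGraph V :=
  G ⊔ SimpleGraph.fromEdgeSet {s(u, v)}

/-- Degree of a vertex. -/
noncomputable def deg {V : Type*} [Fintype V] (G : SimpleGraph V) (u : V) : ℕ :=
  (Finset.univ.filter (fun w => G.Adj u w)).card

/-- The smallest eigenvalue of the principal submatrix of `M` with rows and columns in `S`. -/
noncomputable def principalMin {V : Type*} [Fintype V] (M : Matrix V V ℝ) (S : Finset V) : ℝ :=
  lambdaMin (M.submatrix (fun a : {x // x ∈ S} => (a : V)) (fun a : {x // x ∈ S} => (a : V)))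

/-- The cycle on `Fin n` (for `n ≥ 3`), `i` adjacent to `i ± 1 (mod n)`. -/
def cyc (n : ℕ) : SimpleGraph (Fin n) :=
  SimpleGraph.fromRel (fun i j => (i.val + 1) % n = j.val)

/-- The kite graph `K(H,T)` with head `H`, root `v`, and tail formed by `s` paths of length `r`:
`Sum.inr (i, j)` is the vertex `v_{(i+1)(j+1)}`, the `(j+1)`-st vertex of the `(i+1)`-st path
(so the first path corresponds to `i = 0` and the path vertices adjacent to `v` have `j = 0`). -/
def kite {W : Type*} (H : SimpleGraph W) (v : W) (s r : ℕ) :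
    SimpleGraph (W ⊕ Fin s × Fin r) :=
  SimpleGraph.fromRel (fun a b =>
    match a, b with
    | Sum.inl x, Sum.inl y => H.Adj x y
    | Sum.inl x, Sum.inr (_, j) => x = v ∧ j.val = 0
    | Sum.inr (i, j), Sum.inr (i', j') => i = i' ∧ j.val + 1 = j'.val
    | _, _ => False)

section generic
variable {V : Type*} [Fintype V]

lemma sum_ite_const {β : Type*} [Fintype β] (c : Prop) [Decidable c] (f : β → ℝ) :
    (∑ b : β, (if c then f b else 0)) = if c then ∑ b : β, f b else 0 := by
  split_ifs <;> simp

lemma lap_mulVec (G : SimpleGraph V) (x : V → ℝ) (u : V) :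
    (lapMat G *ᵥ x) u = ∑ w : V, (if G.Adj u w then x u - x w else 0) := by
  simp only [mulVec, dotProduct, lapMat, sub_mul, ite_mul, one_mul, zero_mul,
    Finset.sum_sub_distrib]
  rw [Finset.sum_ite_eq Finset.univ u (fun w => (∑ x : V, (if G.Adj u x then (1:ℝ) else 0)) * x w)]
  simp only [Finset.mem_univ, if_true, Finset.sum_mul, ite_mul, one_mul, zero_mul]
  rw [← Finset.sum_sub_distrib]
  congr 1; ext w; split_ifs <;> ring

lemma lap_symm (G : SimpleGraph V) (u w : V) : lapMat G u w = lapMat G w u := by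
  unfold lapMat
  by_cases h : u = w
  · subst h; rfl
  · simp [h, Ne.symm h, G.adj_comm u w]

lemma lap_dot_symm (G : SimpleGraph V) (x y : V → ℝ) :
    x ⬝ᵥ (lapMat G *ᵥ y) = (lapMat G *ᵥ x) ⬝ᵥ y := by
  simp only [dotProduct, mulVec, dotProduct, Finset.mul_sum, Finset.sum_mul]
  rw [Finset.sum_comm]
  congr 1; ext w; congr 1; ext u
  rw [lap_symm G u w]; ring

lemma lap_quad (G : SimpleGraph V) (x : V → ℝ) :
    x ⬝ᵥ (lapMat G *ᵥ x)
      = (1/2) * ∑ u : V, ∑ w : V, (if G.Adj u w then (x u - x w)^2 else 0) := by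
  have h1 : x ⬝ᵥ (lapMat G *ᵥ x)
      = ∑ u : V, ∑ w : V, (if G.Adj u w then x u * (x u - x w) else 0) := by
    simp only [dotProduct, lap_mulVec, Finset.mul_sum]
    refine Finset.sum_congr rfl fun u _ => Finset.sum_congr rfl fun w _ => ?_
    split_ifs <;> ring
  have h2 : x ⬝ᵥ (lapMat G *ᵥ x)
      = ∑ u : V, ∑ w : V, (if G.Adj u w then x w * (x w - x u) else 0) := by
    rw [h1, Finset.sum_comm]
    refine Finset.sum_congr rfl fun u _ => Finset.sum_congr rfl fun w _ => ?_
    rw [G.adj_comm]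
  have key : (2:ℝ) * (x ⬝ᵥ (lapMat G *ᵥ x))
      = ∑ u : V, ∑ w : V, (if G.Adj u w then (x u - x w)^2 else 0) := by
    rw [two_mul]
    nth_rewrite 1 [h1]
    nth_rewrite 1 [h2]
    rw [← Finset.sum_add_distrib]
    refine Finset.sum_congr rfl fun u _ => ?_
    rw [← Finset.sum_add_distrib]
    refine Finset.sum_congr rfl fun w _ => ?_
    split_ifs <;> ring
  linarith [key]

end generic

section generic2
variable {V : Type*} [Fintype V]

lemma quad_nonneg (G : SimpleGraph V) (x : V → ℝ) : 0 ≤ x ⬝ᵥ (lapMat G *ᵥ x) := by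
  rw [lap_quad]
  have : ∀ u : V, 0 ≤ ∑ w : V, (if G.Adj u w then (x u - x w)^2 else 0) := fun u =>
    Finset.sum_nonneg fun w _ => by split_ifs <;> positivity
  have := Finset.sum_nonneg (fun u (_ : u ∈ Finset.univ) => this u)
  linarith

lemma quad_mono {G G' : SimpleGraph V} (h : G ≤ G') (x : V → ℝ) :
    x ⬝ᵥ (lapMat G *ᵥ x) ≤ x ⬝ᵥ (lapMat G' *ᵥ x) := by
  rw [lap_quad, lap_quad]
  have : ∀ u w : V, (if G.Adj u w then (x u - x w)^2 else 0)
      ≤ (if G'.Adj u w then (x u - x w)^2 else 0) := by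
    intro u w
    by_cases hA : G.Adj u w
    · rw [if_pos hA, if_pos (h hA)]
    · rw [if_neg hA]; split_ifs <;> positivity
  have := Finset.sum_le_sum (fun u (_ : u ∈ Finset.univ) =>
    Finset.sum_le_sum (fun w (_ : w ∈ Finset.univ) => this u w))
  linarith

lemma lap_split {G Gp : SimpleGraph V} (h : G ≤ Gp) (x : V → ℝ) (u : V) :
    (lapMat Gp *ᵥ x) u = (lapMat G *ᵥ x) u + (lapMat (Gp \ G) *ᵥ x) u := by
  simp only [lap_mulVec, ← Finset.sum_add_distrib]
  refine Finset.sum_congr rfl fun w _ => ?_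
  by_cases h1 : G.Adj u w
  · rw [if_pos (h h1), if_pos h1, if_neg (by simp [SimpleGraph.sdiff_adj, h1]), add_zero]
  · by_cases h2 : Gp.Adj u w
    · rw [if_pos h2, if_neg h1, if_pos (by simp [SimpleGraph.sdiff_adj, h1, h2]), zero_add]
    · rw [if_neg h2, if_neg h1, if_neg (by simp [SimpleGraph.sdiff_adj, h2]), add_zero]

lemma lapD_vanish (D : SimpleGraph V) (x : V → ℝ) (h : ∀ a b, D.Adj a b → x a = x b) (u : V) :
    (lapMat D *ᵥ x) u = 0 := by
  rw [lap_mulVec]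
  refine Finset.sum_eq_zero fun w _ => ?_
  split_ifs with hA
  · rw [h u w hA, sub_self]
  · rfl

lemma dot_self_pos {x : V → ℝ} (hx : x ≠ 0) : 0 < x ⬝ᵥ x := by
  obtain ⟨u, hu⟩ : ∃ u, x u ≠ 0 := by
    by_contra h; push_neg at h; exact hx (funext h)
  have h1 : (0:ℝ) < x u * x u := mul_self_pos.mpr hu
  have h2 : x ⬝ᵥ x = ∑ w : V, x w * x w := rfl
  rw [h2]
  exact Finset.sum_pos' (fun w _ => mul_self_nonneg (x w)) ⟨u, Finset.mem_univ u, h1⟩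

end generic2

section kiteL
variable {W : Type*} [Fintype W] (H : SimpleGraph W) (v : W) {s r : ℕ}

lemma kite_adj_ll (x y : W) : (kite H v s r).Adj (Sum.inl x) (Sum.inl y) ↔ H.Adj x y := by
  simp only [kite, SimpleGraph.fromRel_adj]
  constructor
  · rintro ⟨hne, h | h⟩
    · exact h
    · exact h.symm
  · intro h
    exact ⟨by simpa using h.ne, Or.inl h⟩

lemma kite_adj_lr (x : W) (i : Fin s) (j : Fin r) :
    (kite H v s r).Adj (Sum.inl x) (Sum.inr (i, j)) ↔ x = v ∧ j.val = 0 := by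
  simp only [kite, SimpleGraph.fromRel_adj]
  constructor
  · rintro ⟨hne, h | h⟩
    · exact h
    · exact h.elim
  · intro h
    exact ⟨by simp, Or.inl h⟩

lemma kite_adj_rl (x : W) (i : Fin s) (j : Fin r) :
    (kite H v s r).Adj (Sum.inr (i, j)) (Sum.inl x) ↔ x = v ∧ j.val = 0 := by
  rw [SimpleGraph.adj_comm, kite_adj_lr]

lemma kite_adj_rr (i i' : Fin s) (j j' : Fin r) :
    (kite H v s r).Adj (Sum.inr (i, j)) (Sum.inr (i', j')) ↔
      i = i' ∧ (j.val + 1 = j'.val ∨ j'.val + 1 = j.val) := by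
  simp only [kite, SimpleGraph.fromRel_adj]
  constructor
  · rintro ⟨hne, ⟨h1, h2⟩ | ⟨h1, h2⟩⟩
    · exact ⟨h1, Or.inl h2⟩
    · exact ⟨h1.symm, Or.inr h2⟩
  · rintro ⟨h1, h2 | h2⟩
    · refine ⟨?_, Or.inl ⟨h1, h2⟩⟩
      simp only [ne_eq, Sum.inr.injEq, Prod.mk.injEq, not_and]
      intro _ hj
      subst hj; omega
    · refine ⟨?_, Or.inr ⟨h1.symm, h2⟩⟩
      simp only [ne_eq, Sum.inr.injEq, Prod.mk.injEq, not_and]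
      intro _ hj
      subst hj; omega

variable (hr : 0 < r)

lemma lap_kite_inl (x : (W ⊕ Fin s × Fin r) → ℝ) (u : W) :
    (lapMat (kite H v s r) *ᵥ x) (Sum.inl u)
      = (∑ u' : W, if H.Adj u u' then x (Sum.inl u) - x (Sum.inl u') else 0)
        + (if u = v then ∑ i : Fin s, (x (Sum.inl u) - x (Sum.inr (i, ⟨0, hr⟩))) else 0) := by
  rw [lap_mulVec, Fintype.sum_sum_type]
  congr 1
  · exact Finset.sum_congr rfl fun u' _ => by rw [kite_adj_ll]
  · rw [Fintype.sum_prod_type_right]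
    by_cases hu : u = v
    · simp only [hu, if_true]
      have key : ∀ i : Fin s, (∑ j : Fin r,
          if (kite H v s r).Adj (Sum.inl v) (Sum.inr (i, j)) then x (Sum.inl v) - x (Sum.inr (i,j)) else 0)
          = x (Sum.inl v) - x (Sum.inr (i, ⟨0, hr⟩)) := by
        intro i
        have : ∀ j : Fin r, (if (kite H v s r).Adj (Sum.inl v) (Sum.inr (i, j)) then x (Sum.inl v) - x (Sum.inr (i,j)) else 0)
            = if j = ⟨0, hr⟩ then x (Sum.inl v) - x (Sum.inr (i,j)) else 0 := by
          intro j
          congr 1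
          rw [kite_adj_lr]
          simp [Fin.ext_iff]
        rw [Finset.sum_congr rfl fun j _ => this j,
          Finset.sum_ite_eq' Finset.univ (⟨0, hr⟩ : Fin r)]
        simp
      rw [Finset.sum_comm, Finset.sum_congr rfl fun i _ => key i]
    · simp only [hu, if_false]
      refine Finset.sum_eq_zero fun p _ => Finset.sum_eq_zero fun i _ => ?_
      rw [if_neg]
      rw [kite_adj_lr]
      rintro ⟨h1, -⟩
      exact hu h1

lemma lap_kite_inr (x : (W ⊕ Fin s × Fin r) → ℝ) (i : Fin s) (j : Fin r) :
    (lapMat (kite H v s r) *ᵥ x) (Sum.inr (i, j))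
      = (if j.val = 0 then x (Sum.inr (i, j)) - x (Sum.inl v) else 0)
        + ∑ j' : Fin r, (if j.val + 1 = j'.val ∨ j'.val + 1 = j.val
            then x (Sum.inr (i, j)) - x (Sum.inr (i, j')) else 0) := by
  rw [lap_mulVec, Fintype.sum_sum_type]
  congr 1
  · simp only [kite_adj_rl]
    by_cases hj : j.val = 0
    · simp only [hj, and_true]
      rw [Finset.sum_ite_eq' Finset.univ v (fun u' => x (Sum.inr (i,j)) - x (Sum.inl u'))]
      simp
    · simp [hj]
  · rw [Fintype.sum_prod_type]
    have : ∀ i' : Fin s, (∑ j' : Fin r,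
        if (kite H v s r).Adj (Sum.inr (i, j)) (Sum.inr (i', j')) then x (Sum.inr (i,j)) - x (Sum.inr (i',j')) else 0)
        = if i = i' then ∑ j' : Fin r, (if j.val + 1 = j'.val ∨ j'.val + 1 = j.val
            then x (Sum.inr (i, j)) - x (Sum.inr (i, j')) else 0) else 0 := by
      intro i'
      by_cases hi : i = i'
      · subst hi
        rw [if_pos rfl]
        refine Finset.sum_congr rfl fun j' _ => ?_
        rw [kite_adj_rr]
        simp
      · rw [if_neg hi]
        refine Finset.sum_eq_zero fun j' _ => ?_
        rw [if_neg]
        rw [kite_adj_rr]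
        rintro ⟨h1, -⟩
        exact hi h1
    rw [Finset.sum_congr rfl fun i' _ => this i', Finset.sum_ite_eq Finset.univ i]
    simp

end kiteL

section Pavg
variable {W : Type*} [Fintype W] {s r : ℕ}

/-- Averaging over the `s` paths. -/
noncomputable def Pav (s r : ℕ) {W : Type*} (x : (W ⊕ Fin s × Fin r) → ℝ) :
    (W ⊕ Fin s × Fin r) → ℝ := fun u =>
  match u with
  | Sum.inl w => x (Sum.inl w)
  | Sum.inr (i, j) => (∑ i' : Fin s, x (Sum.inr (i', j))) / s

lemma Pav_inl (x : (W ⊕ Fin s × Fin r) → ℝ) (w : W) : Pav s r x (Sum.inl w) = x (Sum.inl w) := rfl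

lemma Pav_inr (x : (W ⊕ Fin s × Fin r) → ℝ) (i : Fin s) (j : Fin r) :
    Pav s r x (Sum.inr (i, j)) = (∑ i' : Fin s, x (Sum.inr (i', j))) / s := rfl

variable (H : SimpleGraph W) (v : W)

lemma sum_fin_sub (hs0 : s ≠ 0) (c T : ℝ) :
    ∑ _i : Fin s, (c - T / s) = (s:ℝ) * c - T := by
  have hsR : (s:ℝ) ≠ 0 := Nat.cast_ne_zero.mpr hs0
  rw [Finset.sum_const, Finset.card_univ, Fintype.card_fin, nsmul_eq_mul, mul_sub]
  congr 1
  field_simp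

lemma Pav_comm (hr : 0 < r) (hs0 : s ≠ 0) (x : (W ⊕ Fin s × Fin r) → ℝ)
    (u : W ⊕ Fin s × Fin r) :
    (lapMat (kite H v s r) *ᵥ Pav s r x) u = Pav s r (lapMat (kite H v s r) *ᵥ x) u := by
  have hsR : (s:ℝ) ≠ 0 := Nat.cast_ne_zero.mpr hs0
  obtain (u | ⟨i, j⟩) := u
  · have hR : Pav s r (lapMat (kite H v s r) *ᵥ x) (Sum.inl u)
        = (lapMat (kite H v s r) *ᵥ x) (Sum.inl u) := rfl
    rw [hR, lap_kite_inl H v hr, lap_kite_inl H v hr]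
    congr 1
    by_cases hu : u = v
    · rw [if_pos hu, if_pos hu]
      have h1 : ∀ i : Fin s, Pav s r x (Sum.inl u) - Pav s r x (Sum.inr (i, ⟨0, hr⟩))
            = x (Sum.inl u) - (∑ i' : Fin s, x (Sum.inr (i', ⟨0, hr⟩))) / s := fun i => rfl
      rw [Finset.sum_congr rfl fun i _ => h1 i, sum_fin_sub hs0]
      rw [Finset.sum_sub_distrib, Finset.sum_const, Finset.card_univ, Fintype.card_fin,
        nsmul_eq_mul]
    · rw [if_neg hu, if_neg hu]
  · rw [lap_kite_inr]
    have hrhs : Pav s r (lapMat (kite H v s r) *ᵥ x) (Sum.inr (i, j))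
        = (∑ i' : Fin s, (lapMat (kite H v s r) *ᵥ x) (Sum.inr (i', j))) / s := rfl
    rw [hrhs]
    have expand : ∀ i' : Fin s, (lapMat (kite H v s r) *ᵥ x) (Sum.inr (i', j))
        = (if j.val = 0 then x (Sum.inr (i', j)) - x (Sum.inl v) else 0)
          + ∑ j' : Fin r, (if j.val + 1 = j'.val ∨ j'.val + 1 = j.val
              then x (Sum.inr (i', j)) - x (Sum.inr (i', j')) else 0) := fun i' =>
      lap_kite_inr H v x i' j
    rw [Finset.sum_congr rfl fun i' _ => expand i', Finset.sum_add_distrib, add_div]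
    congr 1
    · conv_rhs => rw [sum_ite_const]
      by_cases hj : j.val = 0
      · rw [if_pos hj, if_pos hj, Finset.sum_sub_distrib, Finset.sum_const, Finset.card_univ,
          Fintype.card_fin, nsmul_eq_mul, sub_div, Pav_inr, Pav_inl]
        congr 1
        field_simp
      · rw [if_neg hj, if_neg hj, zero_div]
    · conv_rhs => rw [Finset.sum_comm, Finset.sum_div]
      refine Finset.sum_congr rfl fun j' _ => ?_
      conv_rhs => rw [sum_ite_const]
      split_ifs
      · rw [Pav_inr, Pav_inr, Finset.sum_sub_distrib, sub_div]
      · rw [zero_div]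

lemma Pav_sum (hs0 : s ≠ 0) (x : (W ⊕ Fin s × Fin r) → ℝ) :
    (∑ u, Pav s r x u) = ∑ u, x u := by
  have hsR : (s:ℝ) ≠ 0 := Nat.cast_ne_zero.mpr hs0
  rw [Fintype.sum_sum_type, Fintype.sum_sum_type]
  congr 1
  rw [Fintype.sum_prod_type_right, Fintype.sum_prod_type_right]
  refine Finset.sum_congr rfl fun j _ => ?_
  rw [Finset.sum_congr rfl fun i (_ : i ∈ Finset.univ) => Pav_inr x i j]
  rw [Finset.sum_const, Finset.card_univ, Fintype.card_fin, nsmul_eq_mul]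
  field_simp

end Pavg

section colv
variable {W : Type*} [Fintype W] {s r : ℕ} (H : SimpleGraph W) (v : W)

/-- The vector `y(i,j) = c i * g j`, zero on the head. -/
def colVec (c : Fin s → ℝ) (g : Fin r → ℝ) : (W ⊕ Fin s × Fin r) → ℝ := fun u =>
  match u with
  | Sum.inl _ => 0
  | Sum.inr (i, j) => c i * g j

lemma colVec_inl (c : Fin s → ℝ) (g : Fin r → ℝ) (w : W) :
    colVec (W := W) c g (Sum.inl w) = 0 := rfl

lemma colVec_inr (c : Fin s → ℝ) (g : Fin r → ℝ) (i : Fin s) (j : Fin r) :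
    colVec (W := W) c g (Sum.inr (i, j)) = c i * g j := rfl

lemma lap_colVec_inl (hr : 0 < r) (c : Fin s → ℝ) (hc : ∑ i, c i = 0) (g : Fin r → ℝ) (u : W) :
    (lapMat (kite H v s r) *ᵥ colVec c g) (Sum.inl u) = 0 := by
  rw [lap_kite_inl H v hr]
  have h1 : (∑ u' : W, if H.Adj u u' then
      colVec (W := W) c g (Sum.inl u) - colVec (W := W) c g (Sum.inl u') else 0) = 0 :=
    Finset.sum_eq_zero fun u' _ => by rw [colVec_inl, colVec_inl, sub_self, ite_self]
  rw [h1, zero_add]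
  split_ifs
  · have : ∀ i : Fin s, colVec (W := W) c g (Sum.inl u) - colVec (W := W) c g (Sum.inr (i, ⟨0, hr⟩))
        = -(c i * g ⟨0, hr⟩) := fun i => by rw [colVec_inl, colVec_inr, zero_sub]
    rw [Finset.sum_congr rfl fun i _ => this i]
    simp [← Finset.sum_mul, hc]
  · rfl

lemma lap_colVec_inr (hr : 0 < r) (x : (W ⊕ Fin s × Fin r) → ℝ) (hx0 : x (Sum.inl v) = 0)
    (c : Fin s → ℝ) (i0 i : Fin s) (j : Fin r) :
    (lapMat (kite H v s r) *ᵥ colVec c (fun j' => x (Sum.inr (i0, j')))) (Sum.inr (i, j))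
      = c i * (lapMat (kite H v s r) *ᵥ x) (Sum.inr (i0, j)) := by
  rw [lap_kite_inr, lap_kite_inr, mul_add, Finset.mul_sum]
  congr 1
  · rw [colVec_inl, colVec_inr]
    split_ifs
    · rw [hx0]; ring
    · rw [mul_zero]
  · refine Finset.sum_congr rfl fun j' _ => ?_
    rw [colVec_inr, colVec_inr]
    split_ifs
    · ring
    · rw [mul_zero]

/-- Column locality: the Laplacian at a tail vertex only sees `x (inl v)` and the same column. -/
lemma lap_col_local (x y : (W ⊕ Fin s × Fin r) → ℝ) (i : Fin s) (j : Fin r)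
    (hv : x (Sum.inl v) = y (Sum.inl v))
    (hcol : ∀ j' : Fin r, x (Sum.inr (i, j')) = y (Sum.inr (i, j'))) :
    (lapMat (kite H v s r) *ᵥ x) (Sum.inr (i, j))
      = (lapMat (kite H v s r) *ᵥ y) (Sum.inr (i, j)) := by
  rw [lap_kite_inr, lap_kite_inr, hv, hcol j]
  congr 1
  refine Finset.sum_congr rfl fun j' _ => ?_
  rw [hcol j']

lemma dot_decomp (x y : (W ⊕ Fin s × Fin r) → ℝ) :
    x ⬝ᵥ y = (∑ w : W, x (Sum.inl w) * y (Sum.inl w))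
      + ∑ i : Fin s, ∑ j : Fin r, x (Sum.inr (i, j)) * y (Sum.inr (i, j)) := by
  rw [show x ⬝ᵥ y = ∑ u, x u * y u from rfl, Fintype.sum_sum_type, Fintype.sum_prod_type]

lemma sum_decomp (x : (W ⊕ Fin s × Fin r) → ℝ) :
    (∑ u, x u) = (∑ w : W, x (Sum.inl w))
      + ∑ i : Fin s, ∑ j : Fin r, x (Sum.inr (i, j)) := by
  rw [Fintype.sum_sum_type, Fintype.sum_prod_type]

end colv

/-- Let `G = K(H,T)` be a kite graph and let `G⁺` be obtained from `G` by
adding some edges among the vertices of each set `U_j = {v_{2j}, …, v_{sj}}` (`1 ≤ j ≤ r`).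
Then every eigenvalue of `L(G)` is also an eigenvalue of `L(G⁺)`; in particular
`α(G⁺) = α(G)`. -/
theorem stmt11 {W : Type*} [Fintype W] [DecidableEq W] (H : SimpleGraph W)
    (hH : H.Connected) (v : W) (s r : ℕ) (hs : 2 ≤ s) (hr : 1 ≤ r)
    (Gp : SimpleGraph (W ⊕ Fin s × Fin r)) (hle : kite H v s r ≤ Gp)
    (hadd : ∀ a b, Gp.Adj a b → (kite H v s r).Adj a b ∨
      ∃ j : Fin r, ∃ i i' : Fin s, i.val ≠ 0 ∧ i'.val ≠ 0 ∧
        a = Sum.inr (i, j) ∧ b = Sum.inr (i', j)) :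
    (∀ lam : ℝ,
      (∃ x : (W ⊕ Fin s × Fin r) → ℝ, x ≠ 0 ∧ lapMat (kite H v s r) *ᵥ x = lam • x) →
      (∃ y : (W ⊕ Fin s × Fin r) → ℝ, y ≠ 0 ∧ lapMat Gp *ᵥ y = lam • y)) ∧
    algConn Gp = algConn (kite H v s r) := by
  have hr0 : 0 < r := hr
  have hs0 : s ≠ 0 := by omega
  have hspos : 0 < s := by omega
  have hsR : (s:ℝ) ≠ 0 := Nat.cast_ne_zero.mpr hs0
  set K := kite H v s r with hK
  -- structure of added edges
  have hD : ∀ a b, (Gp \ K).Adj a b → ∃ j : Fin r, ∃ i i' : Fin s,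
      i.val ≠ 0 ∧ i'.val ≠ 0 ∧ a = Sum.inr (i, j) ∧ b = Sum.inr (i', j) := by
    intro a b hab
    rcases hadd a b hab.1 with h | h
    · exact absurd h hab.2
    · exact h
  -- the coefficient vector c
  set c : Fin s → ℝ := fun i => if i.val = 0 then (s:ℝ) - 1 else -1 with hc
  have hcsum : ∑ i, c i = 0 := by
    have h1 : ∀ i : Fin s, c i = (if i = ⟨0, hspos⟩ then (s:ℝ) else 0) - 1 := by
      intro i
      simp only [hc, Fin.ext_iff]
      split_ifs <;> simp_all
    rw [Finset.sum_congr rfl fun i _ => h1 i, Finset.sum_sub_distrib,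
      Finset.sum_ite_eq' Finset.univ (⟨0, hspos⟩ : Fin s) (fun _ => (s:ℝ))]
    simp
  have hc0 : c ⟨0, hspos⟩ = (s:ℝ) - 1 := by simp [hc]
  have hc0ne : c ⟨0, hspos⟩ ≠ 0 := by
    rw [hc0]
    have : (2:ℝ) ≤ (s:ℝ) := by exact_mod_cast hs
    linarith
  have hcneg : ∀ i : Fin s, i.val ≠ 0 → c i = -1 := by
    intro i hi; simp [hc, hi]
  have hcsq : 0 < ∑ i, c i * c i := by
    refine Finset.sum_pos (fun i _ => ?_) ⟨⟨0, hspos⟩, Finset.mem_univ _⟩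
    rcases eq_or_ne i.val 0 with h | h
    · have : c i = (s:ℝ) - 1 := by simp [hc, h]
      rw [this]
      have : (2:ℝ) ≤ (s:ℝ) := by exact_mod_cast hs
      nlinarith
    · rw [hcneg i h]; norm_num
  -- vanishing of the added-edge Laplacian on suitable vectors
  have hDvan : ∀ (x : (W ⊕ Fin s × Fin r) → ℝ),
      (∀ (i i' : Fin s) (j : Fin r), i.val ≠ 0 → i'.val ≠ 0 →
        x (Sum.inr (i, j)) = x (Sum.inr (i', j))) →
      ∀ u, (lapMat Gp *ᵥ x) u = (lapMat K *ᵥ x) u := by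
    intro x hx u
    rw [lap_split hle x u, lapD_vanish (Gp \ K) x ?_ u, add_zero]
    intro a b hab
    obtain ⟨j, i, i', hi, hi', rfl, rfl⟩ := hD a b hab
    exact hx i i' j hi hi'
  constructor
  · -- eigenvalue transfer
    rintro lam ⟨x, hx0, hx⟩
    set p : (W ⊕ Fin s × Fin r) → ℝ := Pav s r x with hp
    set z : (W ⊕ Fin s × Fin r) → ℝ := x - p with hzdef
    have hzsub : ∀ u, z u = x u - p u := fun u => rfl
    have hzhead : ∀ w, z (Sum.inl w) = 0 := fun w => by
      rw [hzsub, hp, Pav_inl, sub_self]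
    have hPsmul : ∀ (t : ℝ) (w : (W ⊕ Fin s × Fin r) → ℝ) u,
        Pav s r (t • w) u = t * Pav s r w u := by
      intro t w u
      obtain (w' | ⟨i, j⟩) := u
      · simp [Pav_inl]
      · simp only [Pav_inr, Pi.smul_apply, smul_eq_mul, ← Finset.mul_sum, mul_div_assoc]
    have hp_eig : lapMat K *ᵥ p = lam • p := by
      funext u
      rw [hp, Pav_comm H v hr0 hs0 x u, hx]
      simp [hPsmul lam x u]
    have hz_eig : lapMat K *ᵥ z = lam • z := by
      rw [hzdef, Matrix.mulVec_sub, hx, hp_eig, ← smul_sub]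
    by_cases hz : z = 0
    · refine ⟨x, hx0, ?_⟩
      have hxp : ∀ u, x u = p u := by
        intro u
        have := congrFun hz u
        rw [hzsub] at this
        simp only [Pi.zero_apply] at this
        linarith [this]
      funext u
      rw [hDvan x ?_ u, hx]
      intro i i' j _ _
      rw [hxp (Sum.inr (i, j)), hxp (Sum.inr (i', j)), hp, Pav_inr, Pav_inr]
    · obtain ⟨u0, hu0⟩ : ∃ u, z u ≠ 0 := by
        by_contra h; push_neg at h; exact hz (funext h)
      obtain ⟨i0, j0, hij0⟩ : ∃ i0 j0, z (Sum.inr (i0, j0)) ≠ 0 := by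
        obtain (w | ⟨i, j⟩) := u0
        · exact absurd (hzhead w) hu0
        · exact ⟨i, j, hu0⟩
      set g : Fin r → ℝ := fun j => z (Sum.inr (i0, j)) with hg
      refine ⟨colVec c g, ?_, ?_⟩
      · intro h
        have := congrFun h (Sum.inr (⟨0, hspos⟩, j0))
        rw [colVec_inr] at this
        exact hij0 (by
          have := mul_eq_zero.mp this
          rcases this with h1 | h1
          · exact absurd h1 hc0ne
          · exact h1)
      · funext u
        rw [hDvan (colVec c g) ?_ u]
        · obtain (w | ⟨i, j⟩) := u
          · rw [lap_colVec_inl H v hr0 c hcsum g w]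
            simp [colVec_inl]
          · rw [lap_colVec_inr H v hr0 z (hzhead v) c i0 i j, hz_eig]
            simp only [Pi.smul_apply, smul_eq_mul, colVec_inr]
            simp only [hg]
            ring
        · intro i i' j hi hi'
          rw [colVec_inr, colVec_inr, hcneg i hi, hcneg i' hi']
  · -- algebraic connectivity equality
    have hbdd : ∀ (G : SimpleGraph (W ⊕ Fin s × Fin r)), BddBelow {t : ℝ | ∃ x, x ≠ 0 ∧
        (∑ u, x u) = 0 ∧ x ⬝ᵥ (lapMat G *ᵥ x) / (x ⬝ᵥ x) = t} := by
      intro G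
      refine ⟨0, ?_⟩
      rintro t ⟨x, hx, -, rfl⟩
      exact div_nonneg (quad_nonneg G x) (dot_self_pos hx).le
    have h1s : 1 < s := hs
    set a0 : W ⊕ Fin s × Fin r := Sum.inr (⟨0, hspos⟩, ⟨0, hr0⟩) with ha0
    set b0 : W ⊕ Fin s × Fin r := Sum.inr (⟨1, h1s⟩, ⟨0, hr0⟩) with hb0
    have hab0 : a0 ≠ b0 := by simp [ha0, hb0, Fin.ext_iff]
    set x0 : (W ⊕ Fin s × Fin r) → ℝ :=
      fun u => (if u = a0 then (1:ℝ) else 0) - (if u = b0 then 1 else 0) with hx0def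
    have hx0ne : x0 ≠ 0 := by
      intro h
      have := congrFun h a0
      simp [hx0def, hab0] at this
    have hx0sum : (∑ u, x0 u) = 0 := by
      simp [hx0def, Finset.sum_sub_distrib]
    have hmem : ∀ G : SimpleGraph (W ⊕ Fin s × Fin r),
        x0 ⬝ᵥ (lapMat G *ᵥ x0) / (x0 ⬝ᵥ x0) ∈ {t : ℝ | ∃ x, x ≠ 0 ∧
          (∑ u, x u) = 0 ∧ x ⬝ᵥ (lapMat G *ᵥ x) / (x ⬝ᵥ x) = t} :=
      fun G => ⟨x0, hx0ne, hx0sum, rfl⟩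
    refine le_antisymm ?_ ?_
    · -- α(Gp) ≤ α(K) : the construction side
      unfold algConn
      refine le_csInf ⟨_, hmem K⟩ ?_
      rintro t ⟨x, hx, hsumx, rfl⟩
      suffices hY : ∃ y : (W ⊕ Fin s × Fin r) → ℝ, y ≠ 0 ∧ (∑ u, y u) = 0 ∧
          y ⬝ᵥ (lapMat Gp *ᵥ y) / (y ⬝ᵥ y) ≤ x ⬝ᵥ (lapMat K *ᵥ x) / (x ⬝ᵥ x) by
        obtain ⟨y, h1, h2, h3⟩ := hY
        exact le_trans (csInf_le (hbdd Gp) ⟨y, h1, h2, rfl⟩) h3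
      -- the column construction, for head-zero vectors
      have hcol : ∀ z : (W ⊕ Fin s × Fin r) → ℝ, z ≠ 0 → (∀ w, z (Sum.inl w) = 0) →
          ∃ y : (W ⊕ Fin s × Fin r) → ℝ, y ≠ 0 ∧ (∑ u, y u) = 0 ∧
            y ⬝ᵥ (lapMat Gp *ᵥ y) / (y ⬝ᵥ y) ≤ z ⬝ᵥ (lapMat K *ᵥ z) / (z ⬝ᵥ z) := by
        intro z hz hzh
        set A : Fin s → ℝ :=
          fun i => ∑ j : Fin r, z (Sum.inr (i,j)) * (lapMat K *ᵥ z) (Sum.inr (i,j)) with hA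
        set Qc : Fin s → ℝ := fun i => ∑ j : Fin r, z (Sum.inr (i,j)) * z (Sum.inr (i,j)) with hQc
        have hQnn : ∀ i, 0 ≤ Qc i := fun i => Finset.sum_nonneg fun j _ => mul_self_nonneg _
        have hbsum : z ⬝ᵥ (lapMat K *ᵥ z) = ∑ i, A i := by
          rw [dot_decomp]
          simp only [hzh, zero_mul, Finset.sum_const_zero, zero_add]
          rfl
        have hqsum : z ⬝ᵥ z = ∑ i, Qc i := by
          rw [dot_decomp]
          simp only [hzh, zero_mul, Finset.sum_const_zero, zero_add]
          rfl
        have hqpos : 0 < ∑ i, Qc i := hqsum ▸ dot_self_pos hz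
        have hAnn : ∀ i, 0 ≤ A i := by
          intro i
          set zi := colVec (W := W) (fun i' => if i' = i then (1:ℝ) else 0)
            (fun j => z (Sum.inr (i,j))) with hzi
          have hloc : ∀ j, (lapMat K *ᵥ zi) (Sum.inr (i,j))
              = (lapMat K *ᵥ z) (Sum.inr (i,j)) := by
            intro j
            refine lap_col_local H v zi z i j ?_ ?_
            · rw [hzi, colVec_inl, hzh]
            · intro j'
              rw [hzi, colVec_inr, if_pos rfl, one_mul]
          have hAi : A i = zi ⬝ᵥ (lapMat K *ᵥ zi) := by
            rw [dot_decomp]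
            have hhead : (∑ w : W, zi (Sum.inl w) * (lapMat K *ᵥ zi) (Sum.inl w)) = 0 :=
              Finset.sum_eq_zero fun w _ => by rw [hzi, colVec_inl, zero_mul]
            rw [hhead, zero_add]
            rw [Finset.sum_eq_single i (fun i' _ hi' => Finset.sum_eq_zero fun j _ => by
                rw [hzi, colVec_inr, if_neg hi', zero_mul, zero_mul])
              (fun h => absurd (Finset.mem_univ i) h)]
            rw [hA]
            refine Finset.sum_congr rfl fun j _ => ?_
            rw [hzi, colVec_inr, if_pos rfl, one_mul, hloc j]
          rw [hAi]
          exact quad_nonneg K zi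
        obtain ⟨i0, hqi0, hminc⟩ : ∃ i0, 0 < Qc i0 ∧
            A i0 * (∑ i, Qc i) ≤ (∑ i, A i) * Qc i0 := by
          by_contra hcon
          push_neg at hcon
          have hle' : ∀ i ∈ Finset.univ, (∑ i', A i') * Qc i ≤ A i * (∑ i', Qc i') := by
            intro i _
            rcases (hQnn i).eq_or_lt with h | h
            · rw [← h, mul_zero]
              exact mul_nonneg (hAnn i) hqpos.le
            · exact (hcon i h).le
          obtain ⟨iw, hiw⟩ : ∃ i, 0 < Qc i := by
            by_contra hq
            push_neg at hq
            have : (∑ i, Qc i) ≤ 0 := Finset.sum_nonpos (fun i _ => hq i)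
            linarith
          have hstrict := Finset.sum_lt_sum hle' ⟨iw, Finset.mem_univ iw, hcon iw hiw⟩
          rw [← Finset.mul_sum] at hstrict
          rw [← Finset.sum_mul] at hstrict
          linarith
        have hLy : ∀ (i : Fin s) (j : Fin r),
            (lapMat K *ᵥ colVec c (fun j' => z (Sum.inr (i0, j')))) (Sum.inr (i,j))
              = c i * (lapMat K *ᵥ z) (Sum.inr (i0, j)) :=
          fun i j => lap_colVec_inr H v hr0 z (hzh v) c i0 i j
        refine ⟨colVec c (fun j' => z (Sum.inr (i0, j'))), ?_, ?_, ?_⟩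
        · intro h
          have h2 : Qc i0 = 0 := by
            refine Finset.sum_eq_zero fun j _ => ?_
            have := congrFun h (Sum.inr (⟨0, hspos⟩, j))
            rw [colVec_inr, Pi.zero_apply] at this
            rcases mul_eq_zero.mp this with h1 | h1
            · exact absurd h1 hc0ne
            · rw [h1, mul_zero]
          rw [h2] at hqi0
          exact lt_irrefl 0 hqi0
        · rw [sum_decomp]
          have hhead : (∑ w : W, colVec (W := W) c (fun j' => z (Sum.inr (i0, j'))) (Sum.inl w)) = 0 :=
            Finset.sum_eq_zero fun w _ => colVec_inl _ _ w
          rw [hhead, zero_add]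
          have : ∀ i : Fin s, (∑ j : Fin r,
              colVec (W := W) c (fun j' => z (Sum.inr (i0, j'))) (Sum.inr (i, j)))
              = c i * ∑ j : Fin r, z (Sum.inr (i0, j)) := by
            intro i
            rw [Finset.mul_sum]
            exact Finset.sum_congr rfl fun j _ => colVec_inr _ _ i j
          rw [Finset.sum_congr rfl fun i _ => this i, ← Finset.sum_mul, hcsum, zero_mul]
        · have hyGp : lapMat Gp *ᵥ colVec c (fun j' => z (Sum.inr (i0, j')))
              = lapMat K *ᵥ colVec c (fun j' => z (Sum.inr (i0, j'))) := by
            refine funext (hDvan _ ?_)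
            intro i i' j hi hi'
            rw [colVec_inr, colVec_inr, hcneg i hi, hcneg i' hi']
          rw [hyGp]
          have hyQ : colVec (W := W) c (fun j' => z (Sum.inr (i0, j')))
                ⬝ᵥ (lapMat K *ᵥ colVec c (fun j' => z (Sum.inr (i0, j'))))
              = (∑ i, c i * c i) * A i0 := by
            rw [dot_decomp]
            have hhead : (∑ w : W, colVec (W := W) c (fun j' => z (Sum.inr (i0, j'))) (Sum.inl w)
                * (lapMat K *ᵥ colVec c (fun j' => z (Sum.inr (i0, j')))) (Sum.inl w)) = 0 :=
              Finset.sum_eq_zero fun w _ => by rw [colVec_inl, zero_mul]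
            rw [hhead, zero_add]
            have hterm : ∀ (i : Fin s) (j : Fin r),
                colVec (W := W) c (fun j' => z (Sum.inr (i0, j'))) (Sum.inr (i, j))
                  * (lapMat K *ᵥ colVec c (fun j' => z (Sum.inr (i0, j')))) (Sum.inr (i, j))
                = (c i * c i) * (z (Sum.inr (i0, j)) * (lapMat K *ᵥ z) (Sum.inr (i0, j))) := by
              intro i j
              rw [colVec_inr, hLy i j]
              ring
            rw [Finset.sum_congr rfl fun i _ => Finset.sum_congr rfl fun j _ => hterm i j]
            rw [Finset.sum_congr rfl fun i (_ : i ∈ Finset.univ) =>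
              (Finset.mul_sum Finset.univ (fun j => z (Sum.inr (i0, j))
                * (lapMat K *ᵥ z) (Sum.inr (i0, j))) (c i * c i)).symm]
            rw [← Finset.sum_mul, hA]
          have hyN : colVec (W := W) c (fun j' => z (Sum.inr (i0, j')))
                ⬝ᵥ colVec c (fun j' => z (Sum.inr (i0, j')))
              = (∑ i, c i * c i) * Qc i0 := by
            rw [dot_decomp]
            have hhead : (∑ w : W, colVec (W := W) c (fun j' => z (Sum.inr (i0, j'))) (Sum.inl w)
                * colVec (W := W) c (fun j' => z (Sum.inr (i0, j'))) (Sum.inl w)) = 0 :=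
              Finset.sum_eq_zero fun w _ => by rw [colVec_inl, zero_mul]
            rw [hhead, zero_add]
            have hterm : ∀ (i : Fin s) (j : Fin r),
                colVec (W := W) c (fun j' => z (Sum.inr (i0, j'))) (Sum.inr (i, j))
                  * colVec (W := W) c (fun j' => z (Sum.inr (i0, j'))) (Sum.inr (i, j))
                = (c i * c i) * (z (Sum.inr (i0, j)) * z (Sum.inr (i0, j))) := by
              intro i j
              rw [colVec_inr]
              ring
            rw [Finset.sum_congr rfl fun i _ => Finset.sum_congr rfl fun j _ => hterm i j]
            rw [Finset.sum_congr rfl fun i (_ : i ∈ Finset.univ) =>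
              (Finset.mul_sum Finset.univ (fun j => z (Sum.inr (i0, j))
                * z (Sum.inr (i0, j))) (c i * c i)).symm]
            rw [← Finset.sum_mul, hQc]
          rw [hyQ, hyN, hbsum, hqsum, mul_div_mul_left _ _ (ne_of_gt hcsq)]
          exact (div_le_div_iff₀ hqi0 hqpos).mpr hminc
      -- decomposition x = p + z
      set p : (W ⊕ Fin s × Fin r) → ℝ := Pav s r x with hp
      set z : (W ⊕ Fin s × Fin r) → ℝ := x - p with hzdef
      have hzsub : ∀ u, z u = x u - p u := fun u => rfl
      have hzhead : ∀ w, z (Sum.inl w) = 0 := fun w => by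
        rw [hzsub, hp, Pav_inl, sub_self]
      have hxpz : x = p + z := by
        funext u
        rw [Pi.add_apply, hzsub]
        ring
      have hNpos : 0 < x ⬝ᵥ x := dot_self_pos hx
      have hlayersum : ∀ j : Fin r, (∑ i : Fin s, z (Sum.inr (i, j))) = 0 := by
        intro j
        have : ∀ i : Fin s, z (Sum.inr (i, j))
            = x (Sum.inr (i, j)) - (∑ i' : Fin s, x (Sum.inr (i', j))) / s := by
          intro i
          rw [hzsub, hp, Pav_inr]
        rw [Finset.sum_congr rfl fun i _ => this i, Finset.sum_sub_distrib,
          Finset.sum_const, Finset.card_univ, Fintype.card_fin, nsmul_eq_mul]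
        field_simp
        ring
      have hdotlc : ∀ w : (W ⊕ Fin s × Fin r) → ℝ,
          (∀ (i i' : Fin s) (j : Fin r), w (Sum.inr (i,j)) = w (Sum.inr (i',j))) →
          w ⬝ᵥ z = 0 := by
        intro w hw
        rw [dot_decomp]
        have hhead : (∑ w' : W, w (Sum.inl w') * z (Sum.inl w')) = 0 :=
          Finset.sum_eq_zero fun w' _ => by rw [hzhead, mul_zero]
        rw [hhead, zero_add, Finset.sum_comm]
        refine Finset.sum_eq_zero fun j _ => ?_
        have : ∀ i : Fin s, w (Sum.inr (i, j)) * z (Sum.inr (i, j))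
            = w (Sum.inr (⟨0, hspos⟩, j)) * z (Sum.inr (i, j)) := fun i => by
          rw [hw i ⟨0, hspos⟩ j]
        rw [Finset.sum_congr rfl fun i _ => this i, ← Finset.mul_sum, hlayersum j, mul_zero]
      have hplc : ∀ (i i' : Fin s) (j : Fin r), p (Sum.inr (i,j)) = p (Sum.inr (i',j)) := by
        intro i i' j
        rw [hp, Pav_inr, Pav_inr]
      have hporth : p ⬝ᵥ z = 0 := hdotlc p hplc
      have hLplc : ∀ (i i' : Fin s) (j : Fin r),
          (lapMat K *ᵥ p) (Sum.inr (i,j)) = (lapMat K *ᵥ p) (Sum.inr (i',j)) := by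
        intro i i' j
        rw [hp, Pav_comm H v hr0 hs0 x, Pav_comm H v hr0 hs0 x, Pav_inr, Pav_inr]
      have hcross1 : (lapMat K *ᵥ p) ⬝ᵥ z = 0 := hdotlc _ hLplc
      have hcross2 : p ⬝ᵥ (lapMat K *ᵥ z) = 0 := by
        rw [lap_dot_symm]
        exact hcross1
      have hcross3 : z ⬝ᵥ (lapMat K *ᵥ p) = 0 := by
        rw [dotProduct_comm]
        exact hcross1
      have hdecN : x ⬝ᵥ x = p ⬝ᵥ p + z ⬝ᵥ z := by
        have h0 := congrArg (fun w => w ⬝ᵥ w) hxpz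
        simp only [add_dotProduct, dotProduct_add] at h0
        rw [h0, hporth, dotProduct_comm z p, hporth]
        ring
      have hdecQ : x ⬝ᵥ (lapMat K *ᵥ x) = p ⬝ᵥ (lapMat K *ᵥ p) + z ⬝ᵥ (lapMat K *ᵥ z) := by
        have h0 := congrArg (fun w => w ⬝ᵥ (lapMat K *ᵥ w)) hxpz
        simp only [Matrix.mulVec_add, add_dotProduct, dotProduct_add] at h0
        rw [h0, hcross2, hcross3]
        ring
      by_cases hz0 : z = 0
      · refine ⟨x, hx, hsumx, ?_⟩
        have hxconst : ∀ (i i' : Fin s) (j : Fin r),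
            x (Sum.inr (i,j)) = x (Sum.inr (i',j)) := by
          intro i i' j
          have h1 := congrFun hz0 (Sum.inr (i, j))
          have h2 := congrFun hz0 (Sum.inr (i', j))
          rw [hzsub, Pi.zero_apply] at h1 h2
          have e1 : x (Sum.inr (i, j)) = p (Sum.inr (i, j)) := by linarith
          have e2 : x (Sum.inr (i', j)) = p (Sum.inr (i', j)) := by linarith
          rw [e1, e2, hplc]
        rw [funext (hDvan x (fun i i' j _ _ => hxconst i i' j))]
      · by_cases hp0 : p = 0
        · have hxz : ∀ u, z u = x u := by
            intro u
            rw [hzsub, hp0, Pi.zero_apply, sub_zero]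
          have hxhead : ∀ w, x (Sum.inl w) = 0 := fun w => by rw [← hxz, hzhead]
          exact hcol x hx hxhead
        · have hppos : 0 < p ⬝ᵥ p := dot_self_pos hp0
          have hqpos : 0 < z ⬝ᵥ z := dot_self_pos hz0
          by_cases hab : (p ⬝ᵥ (lapMat K *ᵥ p)) * (x ⬝ᵥ x) ≤ (x ⬝ᵥ (lapMat K *ᵥ x)) * (p ⬝ᵥ p)
          · refine ⟨p, hp0, ?_, ?_⟩
            · rw [hp]
              rw [Pav_sum hs0 x]
              exact hsumx
            · have hpGp : lapMat Gp *ᵥ p = lapMat K *ᵥ p := funext (hDvan p (fun i i' j _ _ => hplc i i' j))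
              rw [hpGp]
              exact (div_le_div_iff₀ hppos hNpos).mpr hab
          · push_neg at hab
            have hbq : (z ⬝ᵥ (lapMat K *ᵥ z)) * (x ⬝ᵥ x)
                ≤ (x ⬝ᵥ (lapMat K *ᵥ x)) * (z ⬝ᵥ z) := by
              have e1 : z ⬝ᵥ (lapMat K *ᵥ z) = x ⬝ᵥ (lapMat K *ᵥ x) - p ⬝ᵥ (lapMat K *ᵥ p) := by
                linarith
              have e2 : z ⬝ᵥ z = x ⬝ᵥ x - p ⬝ᵥ p := by linarith
              rw [e1, e2]
              nlinarith [hab]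
            obtain ⟨y, h1, h2, h3⟩ := hcol z hz0 hzhead
            refine ⟨y, h1, h2, le_trans h3 ?_⟩
            exact (div_le_div_iff₀ hqpos hNpos).mpr hbq
    · -- α(K) ≤ α(Gp) : monotonicity
      unfold algConn
      refine le_csInf ⟨_, hmem Gp⟩ ?_
      rintro t ⟨x, hx, hsumx, rfl⟩
      have h1 : x ⬝ᵥ (lapMat K *ᵥ x) / (x ⬝ᵥ x) ≤ x ⬝ᵥ (lapMat Gp *ᵥ x) / (x ⬝ᵥ x) :=
        (div_le_div_iff_of_pos_right (dot_self_pos hx)).mpr (quad_mono hle x)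
      exact le_trans (csInf_le (hbdd K) ⟨x, hx, hsumx, rfl⟩) h1
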